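/- Let (M^n,g,1^m dvol) be a compact smooth metric measure space with characteristic constant μ and quasi-Einstein scale u = e^{f/(m+n-2)} with quasi-Einstein constant λ > 0 and m > 1. Then |∇f|² < ((m+n-2)²/(m-1))·μ - ((m+n-2)²/(m+n-1))·λ·e^{-2f/(m+n-2)}, and hence using e^{-ax} ≥ 1-ax one gets |∇f|² ≤ (2(m+n-2)/(m+n-1))·λ·f + (m+n-2)²·(μ/(m-1) - λ/(m+n-1)). -/

import Mathlib

/-- Gradient estimate in the quasi-Einstein scale `f = (m+n-2) log u` (used in the
proof of Proposition 6.11): from `|∇u|² + λ/(m+n-1) < (μ/(m-1))u²` with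
`u = e^{f/(m+n-2)}` and `|∇f|² = (m+n-2)²|∇u|²/u²`, one gets
`|∇f|² < ((m+n-2)²/(m-1))μ - ((m+n-2)²/(m+n-1))λ e^{-2f/(m+n-2)}`, and hence, by
`e^{-ax} ≥ 1 - ax`,
`|∇f|² ≤ (2(m+n-2)/(m+n-1))λ f + (m+n-2)²(μ/(m-1) - λ/(m+n-1))`. -/
theorem quasiEinstein_gradient_estimate {M : Type*}
    (m n μ lam : ℝ) (hm : 1 < m) (hmn : 2 < m + n) (hlam : 0 < lam)
    (f Gu Gf u : M → ℝ)
    (hu : ∀ x, u x = Real.exp (f x / (m + n - 2)))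
    (hGu : ∀ x, 0 ≤ Gu x)
    (hGf : ∀ x, Gf x = (m + n - 2) ^ 2 * Gu x / (u x) ^ 2)
    (hdil : ∀ x, Gu x + lam / (m + n - 1) < μ / (m - 1) * (u x) ^ 2) :
    (∀ x, Gf x < (m + n - 2) ^ 2 / (m - 1) * μ
        - (m + n - 2) ^ 2 / (m + n - 1) * lam
            * Real.exp (-2 * f x / (m + n - 2))) ∧
    (∀ x, Gf x ≤ 2 * (m + n - 2) / (m + n - 1) * lam * f x
        + (m + n - 2) ^ 2 * (μ / (m - 1) - lam / (m + n - 1))) := by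
  have hc : (0:ℝ) < m + n - 2 := by linarith
  have hm1 : (0:ℝ) < m - 1 := by linarith
  have hmn1 : (0:ℝ) < m + n - 1 := by linarith
  have hne : m + n - 2 ≠ 0 := ne_of_gt hc
  have hne1 : m + n - 1 ≠ 0 := ne_of_gt hmn1
  have hne2 : m - 1 ≠ 0 := ne_of_gt hm1
  have key : ∀ x, Gf x < (m + n - 2) ^ 2 / (m - 1) * μ
      - (m + n - 2) ^ 2 / (m + n - 1) * lam * Real.exp (-2 * f x / (m + n - 2)) := by
    intro x
    have hupos : 0 < u x := by rw [hu x]; exact Real.exp_pos _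
    have hu2 : (0:ℝ) < (u x) ^ 2 := by positivity
    have hu2ne : (u x) ^ 2 ≠ 0 := ne_of_gt hu2
    have hexp : Real.exp (-2 * f x / (m + n - 2)) = 1 / (u x) ^ 2 := by
      have h2f : -2 * f x / (m + n - 2) = -(f x / (m + n - 2) + f x / (m + n - 2)) := by ring
      rw [h2f, Real.exp_neg, Real.exp_add, hu x, one_div, sq]
    have h := hdil x
    have h' : Gu x / (u x) ^ 2
        < μ / (m - 1) - lam / (m + n - 1) * Real.exp (-2 * f x / (m + n - 2)) := by
      rw [hexp, div_lt_iff₀ hu2]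
      have hr : (μ / (m - 1) - lam / (m + n - 1) * (1 / (u x) ^ 2)) * (u x) ^ 2
          = μ / (m - 1) * (u x) ^ 2 - lam / (m + n - 1) := by
        field_simp
      linarith
    have hc2 : (0:ℝ) < (m + n - 2) ^ 2 := by positivity
    calc Gf x = (m + n - 2) ^ 2 * (Gu x / (u x) ^ 2) := by rw [hGf x]; ring
      _ < (m + n - 2) ^ 2 * (μ / (m - 1)
            - lam / (m + n - 1) * Real.exp (-2 * f x / (m + n - 2))) :=
          mul_lt_mul_of_pos_left h' hc2
      _ = (m + n - 2) ^ 2 / (m - 1) * μ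
            - (m + n - 2) ^ 2 / (m + n - 1) * lam * Real.exp (-2 * f x / (m + n - 2)) := by
          ring
  refine ⟨key, fun x => ?_⟩
  have h1 := key x
  have h2 := Real.add_one_le_exp (-2 * f x / (m + n - 2))
  have hcoef : (0:ℝ) ≤ (m + n - 2) ^ 2 / (m + n - 1) * lam := by positivity
  have h3 := mul_le_mul_of_nonneg_left h2 hcoef
  have hexpand : (m + n - 2) ^ 2 / (m + n - 1) * lam * (-2 * f x / (m + n - 2) + 1)
      = (m + n - 2) ^ 2 / (m + n - 1) * lam - 2 * (m + n - 2) / (m + n - 1) * lam * f x := by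
    field_simp
    ring
  rw [hexpand] at h3
  have e1 : (m + n - 2) ^ 2 / (m - 1) * μ = (m + n - 2) ^ 2 * (μ / (m - 1)) := by ring
  have e2 : (m + n - 2) ^ 2 / (m + n - 1) * lam = (m + n - 2) ^ 2 * (lam / (m + n - 1)) := by ring
  linarith
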